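/- Let f : 2^M → ℝ be a monotone, submodular, normalized set function with multilinear extension F, let x ∈ [0,1]^M, and let d ∈ ℝ^M with d_j ≥ 0 for all j. Then the function t ↦ F(x + t·d) is concave on the interval of t ≥ 0 for which x + t·d ∈ [0,1]^M. -/

import Mathlib

open Finset

/-- A submodular set function. -/
def IsSubmodularR {M : Type*} [DecidableEq M] (f : Finset M → ℝ) : Prop :=
  ∀ A B : Finset M, f (A ∪ B) + f (A ∩ B) ≤ f A + f B

/-- A monotone set function. -/
def IsMonotoneR {M : Type*} (f : Finset M → ℝ) : Prop :=
  ∀ A B : Finset M, A ⊆ B → f A ≤ f B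

/-- The multilinear extension of a set function. -/
noncomputable def mlExtR {M : Type*} [Fintype M] [DecidableEq M]
    (f : Finset M → ℝ) (y : M → ℝ) : ℝ :=
  ∑ S : Finset M, f S * ((∏ j ∈ S, y j) * ∏ j ∈ Sᶜ, (1 - y j))

section Aux

variable {M : Type*} [Fintype M] [DecidableEq M]

/-- auxiliary product function -/
noncomputable def Wfun (x d : M → ℝ) (A B : Finset M) (t : ℝ) : ℝ :=
  (∏ j ∈ A, (x j + t * d j)) * ∏ j ∈ B, (1 - (x j + t * d j))

/-- signed direction coefficient -/
def cfun (d : M → ℝ) (S : Finset M) (i : M) : ℝ := if i ∈ S then d i else -d i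

lemma Wfun_hasDerivAt (x d : M → ℝ) (A B : Finset M) (t : ℝ) :
    HasDerivAt (Wfun x d A B)
      ((∑ i ∈ A, d i * Wfun x d (A.erase i) B t)
        + ∑ i ∈ B, (-d i) * Wfun x d A (B.erase i) t) t := by
  have hp : ∀ i ∈ A, HasDerivAt (fun t : ℝ => x i + t * d i) (d i) t := by
    intro i _
    simpa using ((hasDerivAt_id t).mul_const (d i)).const_add (x i)
  have hq : ∀ i ∈ B, HasDerivAt (fun t : ℝ => 1 - (x i + t * d i)) (-d i) t := by
    intro i _
    simpa using (((hasDerivAt_id t).mul_const (d i)).const_add (x i)).const_sub 1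
  have h := (HasDerivAt.fun_finsetProd hp).mul (HasDerivAt.fun_finsetProd hq)
  refine h.congr_deriv ?_
  rw [Finset.sum_mul, Finset.mul_sum]
  congr 1 <;> refine Finset.sum_congr rfl fun i hi => ?_ <;>
    simp only [Wfun, smul_eq_mul] <;> ring

lemma split_univ_sum (S : Finset M) (h : M → ℝ) :
    ∑ i : M, h i = ∑ i ∈ S, h i + ∑ i ∈ Sᶜ, h i := by
  rw [← Finset.sum_union disjoint_compl_right, Finset.union_compl]

/-- first derivative expression -/
noncomputable def g1fun (f : Finset M → ℝ) (x d : M → ℝ) (t : ℝ) : ℝ :=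
  ∑ S : Finset M, f S * ∑ i : M, cfun d S i * Wfun x d (S.erase i) (Sᶜ.erase i) t

/-- second derivative expression -/
noncomputable def g2fun (f : Finset M → ℝ) (x d : M → ℝ) (t : ℝ) : ℝ :=
  ∑ S : Finset M, f S * ∑ i : M, cfun d S i *
    ∑ k ∈ Finset.univ.erase i, cfun d S k *
      Wfun x d ((S.erase i).erase k) ((Sᶜ.erase i).erase k) t

lemma g_hasDerivAt (f : Finset M → ℝ) (x d : M → ℝ) (t : ℝ) :
    HasDerivAt (fun t => ∑ S : Finset M, f S * Wfun x d S Sᶜ t) (g1fun f x d t) t := by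
  have h := HasDerivAt.fun_sum (u := (Finset.univ : Finset (Finset M)))
    (fun S _ => (Wfun_hasDerivAt x d S Sᶜ t).const_mul (f S))
  refine h.congr_deriv ?_
  refine Finset.sum_congr rfl fun S _ => ?_
  congr 1
  rw [split_univ_sum S]
  congr 1
  · refine Finset.sum_congr rfl fun i hi => ?_
    have h1 : Sᶜ.erase i = Sᶜ :=
      Finset.erase_eq_of_notMem (by simp [Finset.mem_compl, hi])
    rw [h1, cfun, if_pos hi]
  · refine Finset.sum_congr rfl fun i hi => ?_
    have hi' : i ∉ S := Finset.mem_compl.1 hi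
    have h1 : S.erase i = S := Finset.erase_eq_of_notMem hi'
    rw [h1, cfun, if_neg hi']

lemma g1_hasDerivAt (f : Finset M → ℝ) (x d : M → ℝ) (t : ℝ) :
    HasDerivAt (g1fun f x d) (g2fun f x d t) t := by
  have key : ∀ (S : Finset M) (i : M),
      HasDerivAt (fun t => Wfun x d (S.erase i) (Sᶜ.erase i) t)
        (∑ k ∈ Finset.univ.erase i, cfun d S k *
          Wfun x d ((S.erase i).erase k) ((Sᶜ.erase i).erase k) t) t := by
    intro S i
    have h := Wfun_hasDerivAt x d (S.erase i) (Sᶜ.erase i) t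
    convert h using 1
    have hu : (Finset.univ : Finset M).erase i = S.erase i ∪ Sᶜ.erase i := by
      rw [← Finset.erase_union_distrib, Finset.union_compl]
    have hdisj : Disjoint (S.erase i) (Sᶜ.erase i) :=
      disjoint_compl_right.mono (Finset.erase_subset i S) (Finset.erase_subset i Sᶜ)
    rw [hu, Finset.sum_union hdisj]
    congr 1
    · refine Finset.sum_congr rfl fun k hk => ?_
      have hkS : k ∈ S := Finset.mem_of_mem_erase hk
      have h1 : (Sᶜ.erase i).erase k = Sᶜ.erase i := by
        refine Finset.erase_eq_of_notMem fun hc => ?_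
        exact (Finset.mem_compl.1 (Finset.mem_of_mem_erase hc)) hkS
      rw [h1, cfun, if_pos hkS]
    · refine Finset.sum_congr rfl fun k hk => ?_
      have hkS : k ∉ S := Finset.mem_compl.1 (Finset.mem_of_mem_erase hk)
      have h1 : (S.erase i).erase k = S.erase i := by
        refine Finset.erase_eq_of_notMem fun hc => ?_
        exact hkS (Finset.mem_of_mem_erase hc)
      rw [h1, cfun, if_neg hkS]
  exact HasDerivAt.fun_sum fun S _ =>
    (HasDerivAt.fun_sum fun i _ => ((key S i).const_mul (cfun d S i))).const_mul (f S)

lemma Wfun_nonneg (x d : M → ℝ) (A B : Finset M) (t : ℝ)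
    (h : ∀ l, 0 ≤ x l + t * d l ∧ x l + t * d l ≤ 1) :
    0 ≤ Wfun x d A B t :=
  mul_nonneg (Finset.prod_nonneg fun j _ => (h j).1)
    (Finset.prod_nonneg fun j _ => by linarith [(h j).2])

lemma pair_nonpos (f : Finset M → ℝ) (hsub : IsSubmodularR f) (x d : M → ℝ)
    (hd : ∀ l, 0 ≤ d l) (t : ℝ)
    (ht : ∀ l, 0 ≤ x l + t * d l ∧ x l + t * d l ≤ 1) {i k : M} (hik : i ≠ k) :
    ∑ S : Finset M, f S * (cfun d S i * (cfun d S k *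
      Wfun x d ((S.erase i).erase k) ((Sᶜ.erase i).erase k) t)) ≤ 0 := by
  set u : Finset M := (Finset.univ.erase i).erase k with hu
  set F : Finset M → ℝ := fun S => f S * (cfun d S i * (cfun d S k *
      Wfun x d ((S.erase i).erase k) ((Sᶜ.erase i).erase k) t)) with hF
  have hiu : i ∉ insert k u := by simp [hu, Finset.mem_erase, hik]
  have hku : k ∉ u := by simp [hu, Finset.mem_erase]
  have huniv : (Finset.univ : Finset M) = insert i (insert k u) := by
    ext a
    by_cases h1 : a = i <;> by_cases h2 : a = k <;>
      simp [hu, Finset.mem_erase, Finset.mem_insert, h1, h2]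
  have hsplit : ∑ S : Finset M, F S
      = ∑ T ∈ u.powerset, (F T + F (insert k T) + (F (insert i T) + F (insert i (insert k T)))) := by
    rw [show ∑ S : Finset M, F S = ∑ S ∈ (Finset.univ : Finset M).powerset, F S by
      rw [Finset.powerset_univ]]
    rw [huniv, Finset.sum_powerset_insert hiu, Finset.sum_powerset_insert hku,
      Finset.sum_powerset_insert hku, ← Finset.sum_add_distrib, ← Finset.sum_add_distrib,
      ← Finset.sum_add_distrib]
  rw [hsplit]
  refine Finset.sum_nonpos fun T hT => ?_
  have hTu : T ⊆ u := Finset.mem_powerset.1 hT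
  have hiT : i ∉ T := fun h => by simpa [hu, Finset.mem_erase, hik] using hTu h
  have hkT : k ∉ T := fun h => by simpa [hu, Finset.mem_erase] using hTu h
  have hikT : i ∉ insert k T := by simp [Finset.mem_insert, hik, hiT]
  -- common complement-side argument
  set E : Finset M := (Tᶜ.erase i).erase k with hE
  set W : ℝ := Wfun x d T E t with hW
  have hWnn : 0 ≤ W := Wfun_nonneg x d T E t ht
  -- the four set computations
  have e1 : (T.erase i).erase k = T := by
    rw [Finset.erase_eq_of_notMem hiT, Finset.erase_eq_of_notMem hkT]
  have e2 : ((insert k T).erase i).erase k = T := by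
    rw [Finset.erase_eq_of_notMem hikT, Finset.erase_insert hkT]
  have e3 : ((insert i T).erase i).erase k = T := by
    rw [Finset.erase_insert hiT, Finset.erase_eq_of_notMem hkT]
  have e4 : ((insert i (insert k T)).erase i).erase k = T := by
    rw [Finset.erase_insert hikT, Finset.erase_insert hkT]
  have c2 : ((insert k T)ᶜ.erase i).erase k = E := by
    ext a
    by_cases h1 : a = i <;> by_cases h2 : a = k <;>
      simp [hE, Finset.mem_erase, Finset.mem_compl, Finset.mem_insert, h1, h2]
  have c3 : ((insert i T)ᶜ.erase i).erase k = E := by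
    ext a
    by_cases h1 : a = i <;> by_cases h2 : a = k <;>
      simp [hE, Finset.mem_erase, Finset.mem_compl, Finset.mem_insert, h1, h2]
  have c4 : ((insert i (insert k T))ᶜ.erase i).erase k = E := by
    ext a
    by_cases h1 : a = i <;> by_cases h2 : a = k <;>
      simp [hE, Finset.mem_erase, Finset.mem_compl, Finset.mem_insert, h1, h2]
  -- cfun values
  have v1i : cfun d T i = -d i := by simp [cfun, hiT]
  have v1k : cfun d T k = -d k := by simp [cfun, hkT]
  have v2i : cfun d (insert k T) i = -d i := by simp [cfun, Finset.mem_insert, hik, hiT]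
  have v2k : cfun d (insert k T) k = d k := by simp [cfun]
  have v3i : cfun d (insert i T) i = d i := by simp [cfun]
  have v3k : cfun d (insert i T) k = -d k := by
    simp [cfun, Finset.mem_insert, hkT, (Ne.symm hik : k ≠ i)]
  have v4i : cfun d (insert i (insert k T)) i = d i := by simp [cfun]
  have v4k : cfun d (insert i (insert k T)) k = d k := by simp [cfun]
  -- submodularity
  have hun : (insert i T) ∪ (insert k T) = insert i (insert k T) := by
    ext a; simp [Finset.mem_insert, Finset.mem_union]; tauto
  have hin : (insert i T) ∩ (insert k T) = T := by
    ext a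
    by_cases h1 : a = i <;> by_cases h2 : a = k <;>
      simp [Finset.mem_insert, Finset.mem_inter, h1, h2, hik, hiT, hkT]
  have hsubm := hsub (insert i T) (insert k T)
  rw [hun, hin] at hsubm
  have keyineq : f (insert i (insert k T)) + f T - f (insert i T) - f (insert k T) ≤ 0 := by
    linarith
  have expand : F T + F (insert k T) + (F (insert i T) + F (insert i (insert k T)))
      = (d i * d k * W) *
        (f (insert i (insert k T)) + f T - f (insert i T) - f (insert k T)) := by
    simp only [hF, e1, e2, e3, e4, c2, c3, c4, v1i, v1k, v2i, v2k, v3i, v3k, v4i, v4k, ← hW]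
    ring
  rw [expand]
  exact mul_nonpos_of_nonneg_of_nonpos
    (mul_nonneg (mul_nonneg (hd i) (hd k)) hWnn) keyineq

lemma g2_nonpos (f : Finset M → ℝ) (hsub : IsSubmodularR f) (x d : M → ℝ)
    (hd : ∀ l, 0 ≤ d l) (t : ℝ)
    (ht : ∀ l, 0 ≤ x l + t * d l ∧ x l + t * d l ≤ 1) :
    g2fun f x d t ≤ 0 := by
  unfold g2fun
  simp only [Finset.mul_sum]
  rw [Finset.sum_comm]
  refine Finset.sum_nonpos fun i _ => ?_
  rw [Finset.sum_comm]
  refine Finset.sum_nonpos fun k hk => ?_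
  exact pair_nonpos f hsub x d hd t ht (fun h => (Finset.mem_erase.1 hk).1 h.symm)

end Aux

/-- the multilinear extension of a monotone submodular normalized function
is concave along nonnegative directions. -/
theorem stmt8 {M : Type*} [Fintype M] [DecidableEq M]
    (f : Finset M → ℝ) (hmono : IsMonotoneR f) (hsub : IsSubmodularR f)
    (hnorm : f ∅ = 0)
    (x : M → ℝ) (hx : ∀ l, 0 ≤ x l ∧ x l ≤ 1)
    (d : M → ℝ) (hd : ∀ l, 0 ≤ d l) :
    ConcaveOn ℝ
      {t : ℝ | 0 ≤ t ∧ ∀ l, 0 ≤ x l + t * d l ∧ x l + t * d l ≤ 1}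
      (fun t => mlExtR f fun l => x l + t * d l) := by
  set s : Set ℝ := {t : ℝ | 0 ≤ t ∧ ∀ l, 0 ≤ x l + t * d l ∧ x l + t * d l ≤ 1} with hs
  have hg : (fun t => mlExtR f fun l => x l + t * d l)
      = fun t => ∑ S : Finset M, f S * Wfun x d S Sᶜ t := rfl
  set g : ℝ → ℝ := fun t => ∑ S : Finset M, f S * Wfun x d S Sᶜ t with hgdef
  rw [hg]
  have hder : ∀ t, HasDerivAt g (g1fun f x d t) t := fun t => g_hasDerivAt f x d t
  have hder1 : ∀ t, HasDerivAt (g1fun f x d) (g2fun f x d t) t := fun t => g1_hasDerivAt f x d t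
  have hdiff : Differentiable ℝ g := fun t => (hder t).differentiableAt
  have hderiv : deriv g = g1fun f x d := funext fun t => (hder t).deriv
  have hconv : Convex ℝ s := by
    intro t1 h1 t2 h2 a b ha hb hab
    simp only [smul_eq_mul]
    constructor
    · have := mul_nonneg ha h1.1
      have := mul_nonneg hb h2.1
      linarith
    · intro l
      have e : x l + (a * t1 + b * t2) * d l
          = a * (x l + t1 * d l) + b * (x l + t2 * d l) := by
        have : x l = (a + b) * x l := by rw [hab]; ring
        nlinarith [this]
      have p1 := h1.2 l
      have p2 := h2.2 l
      constructor
      · rw [e]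
        have := mul_nonneg ha p1.1
        have := mul_nonneg hb p2.1
        linarith
      · rw [e]
        have := mul_le_mul_of_nonneg_left p1.2 ha
        have := mul_le_mul_of_nonneg_left p2.2 hb
        nlinarith
  refine concaveOn_of_deriv2_nonpos hconv hdiff.continuous.continuousOn
    hdiff.differentiableOn ?_ ?_
  · rw [hderiv]
    exact fun t _ => ((hder1 t).differentiableAt).differentiableWithinAt
  · intro t ht
    have hts : t ∈ s := interior_subset ht
    have h2 : deriv^[2] g t = g2fun f x d t := by
      simp only [Function.iterate_succ_apply', Function.iterate_zero_apply]
      rw [hderiv, (hder1 t).deriv]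
    rw [h2]
    exact g2_nonpos f hsub x d hd t hts.2
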